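/- Let X be a normed space over ℝ or ℂ that is smooth at a point x ≠ 0. Then the norm of X is Gateaux differentiable at x, and the real part of the unique support functional φ_x at x satisfies Re φ_x(y) = lim_{t→0, t∈ℝ} (‖x + t y‖ - ‖x‖)/t for all y ∈ X. -/

import Mathlib

open RCLike

/-- A support functional at `x`: a norm-one continuous linear functional with `φ x = ‖x‖`. -/
def SuppFunc (𝕜 : Type*) [RCLike 𝕜] {X : Type*} [NormedAddCommGroup X] [NormedSpace 𝕜 X]
    (x : X) (φ : X →L[𝕜] 𝕜) : Prop :=
  ‖φ‖ = 1 ∧ φ x = (‖x‖ : 𝕜)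

/-- `X` is smooth at `x` if there is a unique support functional at `x`. -/
def NormSmoothAt (𝕜 : Type*) [RCLike 𝕜] {X : Type*} [NormedAddCommGroup X] [NormedSpace 𝕜 X]
    (x : X) : Prop := ∃! φ : X →L[𝕜] 𝕜, SuppFunc 𝕜 x φ

/-- `X` is smooth if it is smooth at every nonzero point. -/
def NormSmooth (𝕜 : Type*) (X : Type*) [RCLike 𝕜] [NormedAddCommGroup X] [NormedSpace 𝕜 X] :
    Prop := ∀ x : X, x ≠ 0 → NormSmoothAt 𝕜 x

/-- `sip` is the canonical semi-inner product `[u,v] = ‖v‖ * φ_v u` built from support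
functionals (on a smooth space this pins `sip` down uniquely). -/
def IsCompatSIP (𝕜 : Type*) {X : Type*} [RCLike 𝕜] [NormedAddCommGroup X] [NormedSpace 𝕜 X]
    (sip : X → X → 𝕜) : Prop :=
  (∀ u : X, sip u 0 = 0) ∧
  ∀ (u v : X) (φ : X →L[𝕜] 𝕜), SuppFunc 𝕜 v φ → sip u v = (‖v‖ : 𝕜) * φ u

/-- Birkhoff–James orthogonality: `x ⊥ y` iff `‖x + a • y‖ ≥ ‖x‖` for all scalars. -/
def BJOrth (𝕜 : Type*) {X : Type*} [RCLike 𝕜] [NormedAddCommGroup X] [NormedSpace 𝕜 X]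
    (x y : X) : Prop := ∀ a : 𝕜, ‖x‖ ≤ ‖x + a • y‖

/-- A semi-inner product compatible with the norm: additive and homogeneous in the first
variable, conjugate-homogeneous in the second, positive definite, Cauchy–Schwarz, and
`[x,x] = ‖x‖²`. -/
def IsSIP (𝕜 : Type*) {X : Type*} [RCLike 𝕜] [NormedAddCommGroup X] [NormedSpace 𝕜 X]
    (sip : X → X → 𝕜) : Prop :=
  (∀ x y z : X, sip (x + y) z = sip x z + sip y z) ∧
  (∀ (a : 𝕜) (x y : X), sip (a • x) y = a * sip x y) ∧
  (∀ (a : 𝕜) (x y : X), sip x (a • y) = (starRingEnd 𝕜) a * sip x y) ∧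
  (∀ x : X, x ≠ 0 → 0 < re (sip x x) ∧ im (sip x x) = 0) ∧
  (∀ x y : X, ‖sip x y‖ ≤ Real.sqrt (re (sip x x)) * Real.sqrt (re (sip y y))) ∧
  (∀ x : X, sip x x = (‖x‖ : 𝕜) ^ 2)

open Filter Set Topology in
private theorem suppfunc_exists {𝕜 : Type*} [RCLike 𝕜] {X : Type*} [NormedAddCommGroup X]
    [NormedSpace ℝ X] [NormedSpace 𝕜 X] [IsScalarTower ℝ 𝕜 X]
    (x : X) (hx : x ≠ 0) {p : X → ℝ}
    (hadd : ∀ z w, p (z + w) ≤ p z + p w)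
    (hsmul : ∀ c : ℝ, 0 < c → ∀ z, p (c • z) = c * p z)
    (hnorm : ∀ z, p z ≤ ‖z‖)
    (hpx : p x = ‖x‖) (hpnx : p (-x) = -‖x‖)
    (y : X) (hy : y ≠ 0) (d : ℝ) (hd1 : d ≤ p y) (hd2 : -d ≤ p (-y)) :
    ∃ ψ : X →L[𝕜] 𝕜, SuppFunc 𝕜 x ψ ∧ re (ψ y) = d := by
  have hp0 : p 0 = 0 := by
    have h := hsmul 2 two_pos 0
    rw [smul_zero] at h
    linarith
  have hbound : ∀ u : (LinearPMap.mkSpanSingleton (K := ℝ) (σ := RingHom.id ℝ) y d hy).domain,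
      (LinearPMap.mkSpanSingleton (K := ℝ) (σ := RingHom.id ℝ) y d hy) u ≤ p u := by
    rintro ⟨u, hu⟩
    obtain ⟨c, rfl⟩ := Submodule.mem_span_singleton.1 hu
    rw [LinearPMap.mkSpanSingleton'_apply]
    rcases lt_trichotomy c 0 with hc | rfl | hc
    · have h1 : p (c • y) = (-c) * p (-y) := by
        rw [← hsmul (-c) (by linarith) (-y)]
        congr 1
        module
      rw [h1, smul_eq_mul, RingHom.id_apply]
      nlinarith
    · simp [hp0]
    · rw [hsmul c hc, smul_eq_mul]
      exact mul_le_mul_of_nonneg_left hd1 hc.le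
  obtain ⟨g, hgf, hgp⟩ := exists_extension_of_le_sublinear
    (LinearPMap.mkSpanSingleton (K := ℝ) (σ := RingHom.id ℝ) y d hy) p hsmul hadd hbound
  have hgy : g y = d := by
    have h := hgf ⟨y, Submodule.mem_span_singleton_self y⟩
    rwa [LinearPMap.mkSpanSingleton_apply] at h
  have habs : ∀ z, ‖g z‖ ≤ 1 * ‖z‖ := by
    intro z
    rw [one_mul, Real.norm_eq_abs, abs_le]
    constructor
    · have h := (hgp (-z)).trans ((hnorm (-z)).trans_eq (norm_neg z))
      rw [map_neg] at h
      linarith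
    · exact (hgp z).trans (hnorm z)
  let G : X →L[ℝ] ℝ := g.mkContinuous 1 habs
  have hGapp : ∀ z, G z = g z := fun z => rfl
  have hGnorm : ‖G‖ ≤ 1 := g.mkContinuous_norm_le zero_le_one habs
  let ψ : X →L[𝕜] 𝕜 := G.extendTo𝕜'
  have hre : ∀ z, re (ψ z) = g z := by
    intro z
    simp [ψ, ContinuousLinearMap.extendTo𝕜', ContinuousLinearMap.extendTo𝕜'_apply, RCLike.mul_re, hGapp]
  have hψnorm_le : ‖ψ‖ ≤ 1 := le_trans (le_of_eq (G.norm_extendTo𝕜' (𝕜 := 𝕜))) hGnorm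
  have hgx : g x = ‖x‖ := by
    have h1 : g x ≤ ‖x‖ := (hgp x).trans_eq hpx
    have h2 := (hgp (-x)).trans_eq hpnx
    rw [map_neg] at h2
    linarith
  have hψx : ψ x = (‖x‖ : 𝕜) := by
    have h1 : re (ψ x) = ‖x‖ := by rw [hre, hgx]
    have h2 : ‖ψ x‖ ≤ ‖x‖ := by
      have := ψ.le_opNorm x
      nlinarith [norm_nonneg x, norm_nonneg (ψ x)]
    have him : im (ψ x) = 0 := by
      have hns : ‖ψ x‖ * ‖ψ x‖ = re (ψ x) * re (ψ x) + im (ψ x) * im (ψ x) := by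
        have := RCLike.norm_sq_eq_def (z := ψ x)
        rwa [pow_two] at this
      have hsq : ‖ψ x‖ * ‖ψ x‖ ≤ ‖x‖ * ‖x‖ := mul_self_le_mul_self (norm_nonneg _) h2
      have h3 : im (ψ x) * im (ψ x) = 0 := by
        rw [h1] at hns
        nlinarith [mul_self_nonneg (im (ψ x))]
      exact mul_self_eq_zero.1 h3
    apply RCLike.ext
    · rw [h1, RCLike.ofReal_re]
    · rw [him, RCLike.ofReal_im]
  have hψ1 : ‖ψ‖ = 1 := by
    refine le_antisymm hψnorm_le ?_
    have hx' : (0:ℝ) < ‖x‖ := norm_pos_iff.2 hx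
    have h4 : ‖x‖ ≤ ‖ψ‖ * ‖x‖ := by
      calc ‖x‖ = ‖ψ x‖ := by rw [hψx, RCLike.norm_ofReal, abs_of_nonneg (norm_nonneg x)]
        _ ≤ ‖ψ‖ * ‖x‖ := ψ.le_opNorm x
    exact le_of_mul_le_mul_right (by linarith) hx'
  exact ⟨ψ, ⟨hψ1, hψx⟩, by rw [hre, hgy]⟩

open Filter Set Topology in
private theorem gateaux_aux {𝕜 : Type*} [RCLike 𝕜] {X : Type*} [NormedAddCommGroup X]
    [NormedSpace ℝ X] [NormedSpace 𝕜 X] [IsScalarTower ℝ 𝕜 X]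
    (x : X) (hx : x ≠ 0) (hsm : NormSmoothAt 𝕜 x)
    (φ : X →L[𝕜] 𝕜) (hφ : SuppFunc 𝕜 x φ) (y : X) :
    Tendsto (fun t : ℝ => (‖x + t • y‖ - ‖x‖) / t) (𝓝[≠] (0:ℝ)) (𝓝 (re (φ y))) := by
  rcases eq_or_ne y 0 with rfl | hy
  · simp only [smul_zero, add_zero, sub_self, zero_div, map_zero, map_zero]
    exact tendsto_const_nhds
  have hconv : ∀ z : X, ConvexOn ℝ univ (fun t : ℝ => ‖x + t • z‖) := by
    intro z
    have h := (convexOn_univ_norm (E := X)).comp_affineMap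
      (AffineMap.lineMap x (x + z) : ℝ →ᵃ[ℝ] X)
    have he : (fun t : ℝ => ‖x + t • z‖) =
        (norm : X → ℝ) ∘ (AffineMap.lineMap x (x + z) : ℝ →ᵃ[ℝ] X) := by
      funext t
      simp [AffineMap.lineMap_apply, add_comm]
    rw [he]
    simpa using h
  have hmono : ∀ z : X, MonotoneOn (fun t : ℝ => (‖x + t • z‖ - ‖x‖) / t) (Ioi (0:ℝ)) := by
    intro z s hs t ht hst
    have h := (hconv z).secant_mono (a := 0) (mem_univ 0) (mem_univ s) (mem_univ t)
      (ne_of_gt hs) (ne_of_gt ht) hst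
    simpa [slope_def_field] using h
  have habs : ∀ (z : X) (t : ℝ), t ≠ 0 → |(‖x + t • z‖ - ‖x‖) / t| ≤ ‖z‖ := by
    intro z t ht
    rw [abs_div, div_le_iff₀ (abs_pos.2 ht)]
    calc |‖x + t • z‖ - ‖x‖| ≤ ‖(x + t • z) - x‖ := abs_norm_sub_norm_le _ _
      _ = |t| * ‖z‖ := by rw [add_sub_cancel_left, norm_smul, Real.norm_eq_abs]
      _ = ‖z‖ * |t| := mul_comm _ _
  set p : X → ℝ := fun z => sInf ((fun t : ℝ => (‖x + t • z‖ - ‖x‖) / t) '' Ioi 0) with hpdef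
  have hbdd : ∀ z : X, BddBelow ((fun t : ℝ => (‖x + t • z‖ - ‖x‖) / t) '' Ioi 0) := by
    intro z
    refine ⟨-‖z‖, ?_⟩
    rintro r ⟨t, ht, rfl⟩
    exact (abs_le.1 (habs z t (ne_of_gt ht))).1
  have htends : ∀ z : X, Tendsto (fun t : ℝ => (‖x + t • z‖ - ‖x‖) / t) (𝓝[>] (0:ℝ)) (𝓝 (p z)) :=
    fun z => MonotoneOn.tendsto_nhdsGT (hmono z) (hbdd z)
  have hpnorm : ∀ z : X, p z ≤ ‖z‖ := by
    intro z
    refine csInf_le_of_le (hbdd z) (mem_image_of_mem _ (mem_Ioi.2 one_pos)) ?_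
    exact (le_abs_self _).trans (habs z 1 one_ne_zero)
  have hmul : ∀ c : ℝ, 0 < c → Tendsto (fun t : ℝ => c * t) (𝓝[>] (0:ℝ)) (𝓝[>] (0:ℝ)) := by
    intro c hc
    apply tendsto_nhdsWithin_of_tendsto_nhds_of_eventually_within
    · have h : Tendsto (fun t : ℝ => c * t) (𝓝 0) (𝓝 (c * 0)) :=
        (continuous_const.mul continuous_id).tendsto 0
      rw [mul_zero] at h
      exact h.mono_left nhdsWithin_le_nhds
    · filter_upwards [self_mem_nhdsWithin] with t ht
      exact mem_Ioi.2 (mul_pos hc (mem_Ioi.1 ht))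
  have hpadd : ∀ z w : X, p (z + w) ≤ p z + p w := by
    intro z w
    have hcomp : Tendsto (fun t : ℝ => (‖x + (2*t) • z‖ - ‖x‖) / (2*t)
        + (‖x + (2*t) • w‖ - ‖x‖) / (2*t)) (𝓝[>] (0:ℝ)) (𝓝 (p z + p w)) :=
      ((htends z).comp (hmul 2 two_pos)).add ((htends w).comp (hmul 2 two_pos))
    refine le_of_tendsto_of_tendsto (htends (z + w)) hcomp ?_
    filter_upwards [self_mem_nhdsWithin] with t ht
    rw [mem_Ioi] at ht
    have hkey : 2 * ‖x + t • (z + w)‖ ≤ ‖x + (2*t) • z‖ + ‖x + (2*t) • w‖ := by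
      have he : x + t • (z + w) = (2:ℝ)⁻¹ • ((x + (2*t) • z) + (x + (2*t) • w)) := by
        module
      have h2 : ‖x + t • (z + w)‖ ≤ 2⁻¹ * (‖x + (2*t) • z‖ + ‖x + (2*t) • w‖) := by
        rw [he, norm_smul, Real.norm_eq_abs, abs_of_pos (by norm_num : (0:ℝ) < 2⁻¹)]
        exact mul_le_mul_of_nonneg_left (norm_add_le _ _) (by norm_num)
      linarith
    rw [← add_div, div_le_div_iff₀ ht (by linarith : (0:ℝ) < 2*t)]
    nlinarith
  have hpsmul : ∀ c : ℝ, 0 < c → ∀ z : X, p (c • z) = c * p z := by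
    intro c hc z
    have hcomp : Tendsto (fun t : ℝ => c * ((‖x + (c*t) • z‖ - ‖x‖) / (c*t)))
        (𝓝[>] (0:ℝ)) (𝓝 (c * p z)) := ((htends z).comp (hmul c hc)).const_mul c
    refine tendsto_nhds_unique_of_eventuallyEq (htends (c • z)) hcomp ?_
    filter_upwards [self_mem_nhdsWithin] with t ht
    rw [mem_Ioi] at ht
    have he : (c * t) • z = t • (c • z) := by rw [smul_smul, mul_comm, ← smul_smul]
    rw [he]
    field_simp
  have hpx : p x = ‖x‖ := by
    refine tendsto_nhds_unique_of_eventuallyEq (htends x) tendsto_const_nhds ?_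
    filter_upwards [self_mem_nhdsWithin] with t ht
    rw [mem_Ioi] at ht
    have he : x + t • x = (1 + t) • x := by module
    rw [he, norm_smul, Real.norm_eq_abs, abs_of_pos (by linarith)]
    field_simp
    ring
  have hpnx : p (-x) = -‖x‖ := by
    refine tendsto_nhds_unique_of_eventuallyEq (htends (-x)) tendsto_const_nhds ?_
    filter_upwards [Ioo_mem_nhdsGT_of_mem (by norm_num : (0:ℝ) ∈ Ico (0:ℝ) 1)] with t ht
    obtain ⟨ht0, ht1⟩ := ht
    have he : x + t • (-x) = (1 - t) • x := by module
    rw [he, norm_smul, Real.norm_eq_abs, abs_of_pos (by linarith)]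
    field_simp
    ring
  have hp0 : p 0 = 0 := by
    refine tendsto_nhds_unique_of_eventuallyEq (htends 0) tendsto_const_nhds ?_
    filter_upwards with t
    simp
  have hkey0 : ∀ z : X, -p (-z) ≤ p z := by
    intro z
    have h := hpadd z (-z)
    rw [add_neg_cancel, hp0] at h
    linarith
  obtain ⟨ψp, hψp, hψpy⟩ := suppfunc_exists (𝕜 := 𝕜) x hx hpadd hpsmul hpnorm hpx hpnx
    y hy (p y) le_rfl (by have := hkey0 (-y); rwa [neg_neg] at this)
  obtain ⟨ψm, hψm, hψmy⟩ := suppfunc_exists (𝕜 := 𝕜) x hx hpadd hpsmul hpnorm hpx hpnx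
    y hy (-p (-y)) (hkey0 y) (by rw [neg_neg])
  obtain ⟨φ₀, hφ₀, huniq⟩ := hsm
  have e1 : ψp = φ := (huniq ψp hψp).trans (huniq φ hφ).symm
  have e2 : ψm = φ := (huniq ψm hψm).trans (huniq φ hφ).symm
  have hry : re (φ y) = p y := by rw [← e1]; exact hψpy
  have hry' : re (φ y) = -p (-y) := by rw [← e2]; exact hψmy
  rw [← nhdsLT_sup_nhdsGT, tendsto_sup]
  constructor
  · have hneg : Tendsto (fun s : ℝ => -s) (𝓝[<] (0:ℝ)) (𝓝[>] (0:ℝ)) := by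
      apply tendsto_nhdsWithin_of_tendsto_nhds_of_eventually_within
      · have h : Tendsto (fun s : ℝ => -s) (𝓝 (0:ℝ)) (𝓝 (-0)) := continuous_neg.tendsto 0
        rw [neg_zero] at h
        exact h.mono_left nhdsWithin_le_nhds
      · filter_upwards [self_mem_nhdsWithin] with s hs
        exact mem_Ioi.2 (by have := mem_Iio.1 hs; linarith)
    have h := ((htends (-y)).comp hneg).neg
    rw [← hry'] at h
    refine h.congr' ?_
    filter_upwards [self_mem_nhdsWithin] with s hs
    have hs0 : s < 0 := mem_Iio.1 hs
    have he : (-s) • (-y) = s • y := by module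
    simp only [Function.comp_apply, he]
    rw [div_neg, neg_neg]
  · rw [hry]
    exact htends y

theorem stmt0 {𝕜 : Type*} [RCLike 𝕜] {X : Type*} [NormedAddCommGroup X] [NormedSpace 𝕜 X]
    (x : X) (hx : x ≠ 0) (hsm : NormSmoothAt 𝕜 x)
    (φ : X →L[𝕜] 𝕜) (hφ : SuppFunc 𝕜 x φ) (y : X) :
    Filter.Tendsto (fun t : ℝ => (‖x + (t : 𝕜) • y‖ - ‖x‖) / t)
      (nhdsWithin (0 : ℝ) {(0 : ℝ)}ᶜ) (nhds (re (φ y))) := by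
  letI : NormedSpace ℝ X := NormedSpace.restrictScalars ℝ 𝕜 X
  letI : IsScalarTower ℝ 𝕜 X := IsScalarTower.of_algebraMap_smul fun r z => rfl
  have h := gateaux_aux x hx hsm φ hφ y
  refine h.congr fun t => ?_
  rw [RCLike.real_smul_eq_coe_smul (K := 𝕜)]
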